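/- Let c ≥ 1 be an integer and let P ⊆ ℤ² be a finite set generated by a binary generation sequence of size L. Then the c-scaled shape {(c·p₁ + r, c·p₂ + s) : (p₁, p₂) ∈ P, 0 ≤ r < c, 0 ≤ s < c} is generated by a binary generation sequence of size at most L + 4⌊log₂ c⌋ + 1. (This underlies the paper's remarks that its grammar-size results persist for polynomially scaled shapes, with only an additive O(log c) increase in grammar size.) -/

import Mathlib

/-- Translate of a finite set of cells: `u + S`. -/
def translateCells (u : ℤ × ℤ) (S : Finset (ℤ × ℤ)) : Finset (ℤ × ℤ) :=
  S.image (fun p => u + p)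

/-- `S 0, S 1, …, S L` is a binary generation sequence: `S 0 = {(0,0)}` and each
subsequent set is a disjoint union of two translates of earlier sets. -/
def IsBinGenSeq (S : ℕ → Finset (ℤ × ℤ)) (L : ℕ) : Prop :=
  S 0 = {((0 : ℤ), (0 : ℤ))} ∧
    ∀ i : ℕ, 1 ≤ i → i ≤ L → ∃ j l : ℕ, ∃ u v : ℤ × ℤ,
      j < i ∧ l < i ∧
      Disjoint (translateCells u (S j)) (translateCells v (S l)) ∧
      S i = translateCells u (S j) ∪ translateCells v (S l)

/-- `P` is generated by a binary generation sequence of size `L`. -/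
def GeneratedBy (P : Finset (ℤ × ℤ)) (L : ℕ) : Prop :=
  ∃ S : ℕ → Finset (ℤ × ℤ), IsBinGenSeq S L ∧ S L = P

/-- The `c`-scaled version of a shape `P ⊆ ℤ²`: each cell is replaced by a
`c × c` block of cells. -/
noncomputable def scaleCells (c : ℕ) (P : Finset (ℤ × ℤ)) : Finset (ℤ × ℤ) :=
  P.biUnion (fun p =>
    ((Finset.Ico (0 : ℤ) (c : ℤ)) ×ˢ (Finset.Ico (0 : ℤ) (c : ℤ))).image
      (fun q => ((c : ℤ) * p.1 + q.1, (c : ℤ) * p.2 + q.2)))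

/-! ### Auxiliary machinery -/

/-- A generation sequence relative to an arbitrary base set `B`. -/
def RelGenSeq (B : Finset (ℤ × ℤ)) (S : ℕ → Finset (ℤ × ℤ)) (L : ℕ) : Prop :=
  S 0 = B ∧
    ∀ i : ℕ, 1 ≤ i → i ≤ L → ∃ j l : ℕ, ∃ u v : ℤ × ℤ,
      j < i ∧ l < i ∧
      Disjoint (translateCells u (S j)) (translateCells v (S l)) ∧
      S i = translateCells u (S j) ∪ translateCells v (S l)

lemma isBinGenSeq_iff_rel (S : ℕ → Finset (ℤ × ℤ)) (L : ℕ) :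
    IsBinGenSeq S L ↔ RelGenSeq {((0 : ℤ), (0 : ℤ))} S L := Iff.rfl

lemma mem_translateCells {u : ℤ × ℤ} {S : Finset (ℤ × ℤ)} {x : ℤ × ℤ} :
    x ∈ translateCells u S ↔ ∃ p ∈ S, u + p = x := by
  simp only [translateCells, Finset.mem_image]

lemma pgfTransComp (u v : ℤ × ℤ) (S : Finset (ℤ × ℤ)) :
    translateCells u (translateCells v S) = translateCells (u + v) S := by
  ext x
  simp only [mem_translateCells]
  constructor
  · rintro ⟨p, ⟨q, hq, rfl⟩, rfl⟩; exact ⟨q, hq, by ring⟩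
  · rintro ⟨q, hq, rfl⟩; exact ⟨v + q, ⟨q, hq, rfl⟩, by ring⟩

lemma pgfTransZero (S : Finset (ℤ × ℤ)) : translateCells 0 S = S := by
  ext x; simp [mem_translateCells]

/-- Multiples of a direction vector. -/
def dm (d : ℤ × ℤ) (i : ℕ) : ℤ × ℤ := ((i : ℤ) * d.1, (i : ℤ) * d.2)

lemma dm_add (d : ℤ × ℤ) (a b : ℕ) : dm d a + dm d b = dm d (a + b) := by
  simp only [dm, Prod.mk_add_mk, Prod.mk.injEq]
  constructor <;> push_cast <;> ring

/-- Stack of `k` translates of `R` along direction `d`. -/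
def stack (R : Finset (ℤ × ℤ)) (d : ℤ × ℤ) (k : ℕ) : Finset (ℤ × ℤ) :=
  (Finset.range k).biUnion (fun i => translateCells (dm d i) R)

lemma stack_one (R : Finset (ℤ × ℤ)) (d : ℤ × ℤ) : stack R d 1 = R := by
  have h0 : dm d 0 = 0 := by simp [dm, Prod.ext_iff]
  simp [stack, h0, pgfTransZero]

lemma pgfTransStack (R : Finset (ℤ × ℤ)) (d : ℤ × ℤ) (a b : ℕ) :
    translateCells (dm d a) (stack R d b) =
      (Finset.range b).biUnion (fun i => translateCells (dm d (a + i)) R) := by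
  unfold stack translateCells
  rw [Finset.biUnion_image]
  refine Finset.biUnion_congr rfl ?_
  intro i _
  rw [Finset.image_image]
  have hfun : ((fun p => dm d a + p) ∘ (fun p => dm d i + p)) =
      fun p : ℤ × ℤ => dm d (a + i) + p := by
    funext p
    simp only [Function.comp_apply, ← add_assoc, dm_add]
  rw [hfun]

lemma stack_split (R : Finset (ℤ × ℤ)) (d : ℤ × ℤ) (a b : ℕ) :
    stack R d (a + b) = stack R d a ∪ translateCells (dm d a) (stack R d b) := by
  rw [pgfTransStack]
  ext x
  simp only [stack, Finset.mem_biUnion, Finset.mem_union, Finset.mem_range]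
  constructor
  · rintro ⟨i, hi, hx⟩
    rcases lt_or_ge i a with h | h
    · exact Or.inl ⟨i, h, hx⟩
    · exact Or.inr ⟨i - a, by omega, by rwa [Nat.add_sub_cancel' h]⟩
  · rintro (⟨i, hi, hx⟩ | ⟨i, hi, hx⟩)
    · exact ⟨i, by omega, hx⟩
    · exact ⟨a + i, by omega, hx⟩

lemma stack_disjoint {R : Finset (ℤ × ℤ)} {d : ℤ × ℤ}
    (hd : ∀ a b : ℕ, a ≠ b →
      Disjoint (translateCells (dm d a) R) (translateCells (dm d b) R))
    (a b : ℕ) :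
    Disjoint (stack R d a) (translateCells (dm d a) (stack R d b)) := by
  rw [pgfTransStack, stack]
  rw [Finset.disjoint_biUnion_left]
  intro i hi
  rw [Finset.disjoint_biUnion_right]
  intro j hj
  exact hd i (a + j) (by simp at hi; omega)

/-- Extend a relative generation sequence by one step. -/
lemma rel_snoc {B : Finset (ℤ × ℤ)} {S : ℕ → Finset (ℤ × ℤ)} {m : ℕ}
    (hS : RelGenSeq B S m) {X : Finset (ℤ × ℤ)}
    (hX : ∃ j l : ℕ, ∃ u v : ℤ × ℤ, j ≤ m ∧ l ≤ m ∧
      Disjoint (translateCells u (S j)) (translateCells v (S l)) ∧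
      X = translateCells u (S j) ∪ translateCells v (S l)) :
    RelGenSeq B (fun i => if i ≤ m then S i else X) (m + 1) := by
  obtain ⟨h0, hstep⟩ := hS
  constructor
  · simpa using h0
  · intro i hi1 him
    rcases le_or_gt i m with h | h
    · obtain ⟨j, l, u, v, hj, hl, hdis, heq⟩ := hstep i hi1 h
      refine ⟨j, l, u, v, hj, hl, ?_, ?_⟩ <;> dsimp only <;>
        rw [if_pos (le_of_lt (lt_of_lt_of_le hj h)),
          if_pos (le_of_lt (lt_of_lt_of_le hl h))]
      · exact hdis
      · rw [if_pos h]; exact heq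
    · have : i = m + 1 := by omega
      subst this
      obtain ⟨j, l, u, v, hj, hl, hdis, heq⟩ := hX
      refine ⟨j, l, u, v, by omega, by omega, ?_, ?_⟩ <;> dsimp only <;>
        rw [if_pos hj, if_pos hl]
      · exact hdis
      · rw [if_neg (by omega : ¬ m + 1 ≤ m)]; exact heq

/-- Concatenate two relative generation sequences. -/
lemma rel_append {A B : Finset (ℤ × ℤ)} {S T : ℕ → Finset (ℤ × ℤ)} {m n : ℕ}
    (hS : RelGenSeq A S m) (hB : S m = B) (hT : RelGenSeq B T n) :
    RelGenSeq A (fun i => if i ≤ m then S i else T (i - m)) (m + n) := by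
  obtain ⟨hS0, hSstep⟩ := hS
  obtain ⟨hT0, hTstep⟩ := hT
  constructor
  · simpa using hS0
  · intro i hi1 him
    rcases le_or_gt i m with h | h
    · obtain ⟨j, l, u, v, hj, hl, hdis, heq⟩ := hSstep i hi1 h
      refine ⟨j, l, u, v, hj, hl, ?_, ?_⟩ <;> dsimp only <;>
        rw [if_pos (le_of_lt (lt_of_lt_of_le hj h)),
          if_pos (le_of_lt (lt_of_lt_of_le hl h))]
      · exact hdis
      · rw [if_pos h]; exact heq
    · obtain ⟨j, l, u, v, hj, hl, hdis, heq⟩ := hTstep (i - m) (by omega) (by omega)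
      have hTj : (if m + j ≤ m then S (m + j) else T (m + j - m)) = T j := by
        rcases Nat.eq_zero_or_pos j with rfl | hjp
        · simp [hB, hT0]
        · rw [if_neg (by omega)]; congr 1; omega
      have hTl : (if m + l ≤ m then S (m + l) else T (m + l - m)) = T l := by
        rcases Nat.eq_zero_or_pos l with rfl | hlp
        · simp [hB, hT0]
        · rw [if_neg (by omega)]; congr 1; omega
      refine ⟨m + j, m + l, u, v, by omega, by omega, ?_, ?_⟩ <;> dsimp only <;>
        rw [hTj, hTl]
      · exact hdis
      · rw [if_neg (by omega : ¬ i ≤ m)]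
        have : i - m = m + j - m + (i - m - (m + j - m)) := by omega
        rw [show i - m = i - m from rfl]
        exact heq

/-- A stack of `k ≥ 1` copies can be generated from `R` in at most `2 log₂ k` steps. -/
lemma stack_gen (R : Finset (ℤ × ℤ)) (d : ℤ × ℤ)
    (hd : ∀ a b : ℕ, a ≠ b →
      Disjoint (translateCells (dm d a) R) (translateCells (dm d b) R)) :
    ∀ k : ℕ, 1 ≤ k → ∃ m : ℕ, ∃ T : ℕ → Finset (ℤ × ℤ),
      m ≤ 2 * Nat.log 2 k ∧ RelGenSeq R T m ∧ T m = stack R d k := by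
  intro k
  induction k using Nat.strong_induction_on with
  | _ k ih =>
    intro hk
    rcases eq_or_lt_of_le hk with h1 | h2
    · refine ⟨0, fun _ => R, by omega, ⟨rfl, by omega⟩, by rw [← h1, stack_one]⟩
    · -- k ≥ 2
      set q := k / 2 with hq
      have hq1 : 1 ≤ q := by omega
      have hqk : q < k := by omega
      obtain ⟨m, T, hm, hT, hTm⟩ := ih q hqk hq1
      have hT0 : T 0 = R := hT.1
      -- step 1: double
      have hdis1 : Disjoint (translateCells 0 (T m)) (translateCells (dm d q) (T m)) := by
        rw [hTm, pgfTransZero]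
        exact stack_disjoint hd q q
      set T1 : ℕ → Finset (ℤ × ℤ) :=
        fun i => if i ≤ m then T i
          else translateCells 0 (T m) ∪ translateCells (dm d q) (T m) with hT1def
      have hT1 : RelGenSeq R T1 (m + 1) :=
        rel_snoc hT ⟨m, m, 0, dm d q, le_rfl, le_rfl, hdis1, rfl⟩
      have hT1m : T1 (m + 1) = stack R d (2 * q) := by
        simp only [hT1def, if_neg (by omega : ¬ m + 1 ≤ m)]
        rw [pgfTransZero, hTm, ← stack_split]
        congr 1; omega
      have hlog : Nat.log 2 k = Nat.log 2 q + 1 :=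
        Nat.log_of_one_lt_of_le one_lt_two (by omega)
      rcases Nat.even_or_odd k with he | ho
      · -- k = 2q
        have hk2 : k = 2 * q := by
          obtain ⟨t, ht⟩ := he; omega
        exact ⟨m + 1, T1, by omega, hT1, by rw [hT1m, hk2]⟩
      · -- k = 2q + 1
        have hk2 : k = 2 * q + 1 := by
          obtain ⟨t, ht⟩ := ho; omega
        have hT10 : T1 0 = R := hT1.1
        have hdis2 : Disjoint (translateCells 0 (T1 (m + 1)))
            (translateCells (dm d (2 * q)) (T1 0)) := by
          have h := stack_disjoint hd (2 * q) 1
          rw [stack_one] at h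
          rwa [hT1m, hT10, pgfTransZero]
        refine ⟨m + 2, fun i => if i ≤ m + 1 then T1 i
          else translateCells 0 (T1 (m + 1)) ∪ translateCells (dm d (2 * q)) (T1 0),
          by omega, ?_, ?_⟩
        · exact rel_snoc hT1 ⟨m + 1, 0, 0, dm d (2 * q), le_rfl, by omega, hdis2, rfl⟩
        · simp only [if_neg (by omega : ¬ m + 2 ≤ m + 1)]
          rw [pgfTransZero, hT1m, hT10, hk2, stack_split, stack_one]

/-! ### Scaling lemmas -/

lemma mem_scaleCells {c : ℕ} {P : Finset (ℤ × ℤ)} {x : ℤ × ℤ} :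
    x ∈ scaleCells c P ↔ ∃ p ∈ P, ∃ r s : ℤ, 0 ≤ r ∧ r < c ∧ 0 ≤ s ∧ s < c ∧
      x = ((c : ℤ) * p.1 + r, (c : ℤ) * p.2 + s) := by
  simp only [scaleCells, Finset.mem_biUnion, Finset.mem_image, Finset.mem_product,
    Finset.mem_Ico]
  constructor
  · rintro ⟨p, hp, ⟨r, s⟩, ⟨⟨hr0, hr1⟩, hs0, hs1⟩, rfl⟩
    exact ⟨p, hp, r, s, hr0, hr1, hs0, hs1, rfl⟩
  · rintro ⟨p, hp, r, s, hr0, hr1, hs0, hs1, rfl⟩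
    exact ⟨p, hp, ⟨r, s⟩, ⟨⟨hr0, hr1⟩, hs0, hs1⟩, rfl⟩

lemma scale_point_mem {c : ℕ} (hc : 1 ≤ c) {P : Finset (ℤ × ℤ)} {x : ℤ × ℤ}
    (hx : x ∈ scaleCells c P) : (x.1 / (c : ℤ), x.2 / (c : ℤ)) ∈ P := by
  rw [mem_scaleCells] at hx
  obtain ⟨p, hp, r, s, hr0, hr1, hs0, hs1, rfl⟩ := hx
  have hc0 : (c : ℤ) ≠ 0 := by exact_mod_cast Nat.one_le_iff_ne_zero.mp hc
  have h1 : ((c : ℤ) * p.1 + r) / (c : ℤ) = p.1 := by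
    rw [add_comm, Int.add_mul_ediv_left r p.1 hc0, Int.ediv_eq_zero_of_lt hr0 hr1, zero_add]
  have h2 : ((c : ℤ) * p.2 + s) / (c : ℤ) = p.2 := by
    rw [add_comm, Int.add_mul_ediv_left s p.2 hc0, Int.ediv_eq_zero_of_lt hs0 hs1, zero_add]
  simpa [h1, h2] using hp

lemma scale_disjoint {c : ℕ} (hc : 1 ≤ c) {A B : Finset (ℤ × ℤ)} (h : Disjoint A B) :
    Disjoint (scaleCells c A) (scaleCells c B) := by
  rw [Finset.disjoint_left] at h ⊢
  intro x hxA hxB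
  exact h (scale_point_mem hc hxA) (scale_point_mem hc hxB)

lemma scale_union (c : ℕ) (A B : Finset (ℤ × ℤ)) :
    scaleCells c (A ∪ B) = scaleCells c A ∪ scaleCells c B := by
  ext x
  simp only [mem_scaleCells, Finset.mem_union]
  constructor
  · rintro ⟨p, hp | hp, h⟩
    · exact Or.inl ⟨p, hp, h⟩
    · exact Or.inr ⟨p, hp, h⟩
  · rintro (⟨p, hp, h⟩ | ⟨p, hp, h⟩)
    · exact ⟨p, Or.inl hp, h⟩
    · exact ⟨p, Or.inr hp, h⟩

lemma scale_translate (c : ℕ) (u : ℤ × ℤ) (S : Finset (ℤ × ℤ)) :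
    scaleCells c (translateCells u S) =
      translateCells ((c : ℤ) * u.1, (c : ℤ) * u.2) (scaleCells c S) := by
  ext x
  simp only [mem_scaleCells, mem_translateCells]
  constructor
  · rintro ⟨p, ⟨p', hp', rfl⟩, r, s, hr0, hr1, hs0, hs1, rfl⟩
    refine ⟨((c : ℤ) * p'.1 + r, (c : ℤ) * p'.2 + s),
      ⟨p', hp', r, s, hr0, hr1, hs0, hs1, rfl⟩, ?_⟩
    simp [Prod.ext_iff]; constructor <;> ring
  · rintro ⟨y, ⟨p, hp, r, s, hr0, hr1, hs0, hs1, rfl⟩, rfl⟩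
    refine ⟨u + p, ⟨p, hp, rfl⟩, r, s, hr0, hr1, hs0, hs1, ?_⟩
    simp [Prod.ext_iff]; constructor <;> ring

/-! ### Concrete row/block shapes -/

lemma mem_row {c : ℕ} {x : ℤ × ℤ} :
    x ∈ stack ({((0 : ℤ), (0 : ℤ))} : Finset (ℤ × ℤ)) (1, 0) c ↔
      0 ≤ x.1 ∧ x.1 < c ∧ x.2 = 0 := by
  simp only [stack, Finset.mem_biUnion, Finset.mem_range, mem_translateCells,
    Finset.mem_singleton, dm]
  constructor
  · rintro ⟨i, hi, p, rfl, rfl⟩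
    simp; omega
  · rintro ⟨h0, h1, h2⟩
    refine ⟨x.1.toNat, by omega, ((0 : ℤ), (0 : ℤ)), rfl, ?_⟩
    have : x = (x.1, x.2) := rfl
    rw [this, h2]
    simp [Prod.ext_iff]; omega

lemma row_hd (c' : ℕ) : ∀ a b : ℕ, a ≠ b →
    Disjoint (translateCells (dm (1, 0) a) ({((0 : ℤ), (0 : ℤ))} : Finset (ℤ × ℤ)))
      (translateCells (dm (1, 0) b) ({((0 : ℤ), (0 : ℤ))} : Finset (ℤ × ℤ))) := by
  intro a b hab
  rw [Finset.disjoint_left]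
  intro x hxa hxb
  rw [mem_translateCells] at hxa hxb
  obtain ⟨p, hp, rfl⟩ := hxa
  obtain ⟨p', hp', heq⟩ := hxb
  simp only [Finset.mem_singleton] at hp hp'
  subst hp; subst hp'
  simp only [dm, Prod.ext_iff, Prod.fst_add, Prod.snd_add] at heq
  have h1 := heq.1
  simp only [mul_one] at h1
  exact hab (by omega)

def rowSet (c : ℕ) : Finset (ℤ × ℤ) := stack ({((0 : ℤ), (0 : ℤ))} : Finset (ℤ × ℤ)) (1, 0) c

lemma mem_block {c k : ℕ} {x : ℤ × ℤ} :
    x ∈ stack (rowSet c) (0, 1) k ↔ 0 ≤ x.1 ∧ x.1 < c ∧ 0 ≤ x.2 ∧ x.2 < k := by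
  simp only [stack, Finset.mem_biUnion, Finset.mem_range, mem_translateCells, dm]
  constructor
  · rintro ⟨i, hi, p, hp, rfl⟩
    rw [rowSet, mem_row] at hp
    simp only [Prod.fst_add, Prod.snd_add]
    constructor
    · simpa using hp.1
    constructor
    · simpa using hp.2.1
    · simp [hp.2.2]; omega
  · rintro ⟨h0, h1, h2, h3⟩
    refine ⟨x.2.toNat, by omega, (x.1, 0), ?_, ?_⟩
    · rw [rowSet, mem_row]; exact ⟨h0, h1, rfl⟩
    · have : x = (x.1, x.2) := rfl
      rw [this]; simp [Prod.ext_iff]; omega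

lemma block_hd (c : ℕ) : ∀ a b : ℕ, a ≠ b →
    Disjoint (translateCells (dm (0, 1) a) (rowSet c))
      (translateCells (dm (0, 1) b) (rowSet c)) := by
  intro a b hab
  rw [Finset.disjoint_left]
  intro x hxa hxb
  rw [mem_translateCells] at hxa hxb
  obtain ⟨p, hp, rfl⟩ := hxa
  obtain ⟨p', hp', heq⟩ := hxb
  rw [rowSet, mem_row] at hp hp'
  simp only [dm, Prod.ext_iff, Prod.fst_add, Prod.snd_add] at heq
  have h2 := heq.2
  rw [hp.2.2, hp'.2.2] at h2
  simp only [mul_one] at h2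
  exact hab (by omega)

lemma scale_singleton (c : ℕ) :
    scaleCells c ({((0 : ℤ), (0 : ℤ))} : Finset (ℤ × ℤ)) = stack (rowSet c) (0, 1) c := by
  ext x
  rw [mem_block, mem_scaleCells]
  constructor
  · rintro ⟨p, hp, r, s, hr0, hr1, hs0, hs1, rfl⟩
    simp only [Finset.mem_singleton] at hp
    subst hp
    simp; omega
  · rintro ⟨h0, h1, h2, h3⟩
    refine ⟨((0 : ℤ), (0 : ℤ)), Finset.mem_singleton_self _, x.1, x.2, h0, h1, h2, h3, ?_⟩
    simp

/-- The scaled sequence is a relative generation sequence over the block. -/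
lemma scale_rel {c : ℕ} (hc : 1 ≤ c) {S : ℕ → Finset (ℤ × ℤ)} {L : ℕ}
    (hS : IsBinGenSeq S L) :
    RelGenSeq (stack (rowSet c) (0, 1) c) (fun i => scaleCells c (S i)) L := by
  obtain ⟨h0, hstep⟩ := hS
  constructor
  · show scaleCells c (S 0) = _
    rw [h0, scale_singleton]
  · intro i hi1 hiL
    obtain ⟨j, l, u, v, hj, hl, hdis, heq⟩ := hstep i hi1 hiL
    dsimp only
    refine ⟨j, l, ((c : ℤ) * u.1, (c : ℤ) * u.2), ((c : ℤ) * v.1, (c : ℤ) * v.2),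
      hj, hl, ?_, ?_⟩
    · rw [← scale_translate, ← scale_translate]
      exact scale_disjoint hc hdis
    · rw [← scale_translate, ← scale_translate, ← scale_union, heq]

/-- if `P` is generated by a binary generation sequence of size `L`,
then its `c`-scaled version is generated by a binary generation sequence of size
at most `L + 4⌊log₂ c⌋ + 1`. -/
theorem scaled_shape_generated (c : ℕ) (hc : 1 ≤ c) (P : Finset (ℤ × ℤ)) (L : ℕ)
    (hP : GeneratedBy P L) :
    ∃ L' : ℕ, L' ≤ L + 4 * Nat.log 2 c + 1 ∧ GeneratedBy (scaleCells c P) L' := by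
  obtain ⟨S, hS, hSL⟩ := hP
  -- build the 1×c row from the point
  obtain ⟨m1, T1, hm1, hT1, hT1m⟩ :=
    stack_gen ({((0 : ℤ), (0 : ℤ))} : Finset (ℤ × ℤ)) (1, 0) (row_hd c) c hc
  -- build the c×c block from the row
  obtain ⟨m2, T2, hm2, hT2, hT2m⟩ := stack_gen (rowSet c) (0, 1) (block_hd c) c hc
  -- scaled sequence relative to the block
  have hT3 : RelGenSeq (stack (rowSet c) (0, 1) c) (fun i => scaleCells c (S i)) L :=
    scale_rel hc hS
  -- assemble
  have h12 := rel_append hT1 hT1m hT2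
  set U12 : ℕ → Finset (ℤ × ℤ) := fun i => if i ≤ m1 then T1 i else T2 (i - m1) with hU12
  have hval12 : U12 (m1 + m2) = stack (rowSet c) (0, 1) c := by
    rcases Nat.eq_zero_or_pos m2 with h | h
    · subst h
      simp only [hU12, add_zero, if_pos le_rfl]
      rw [hT1m, ← hT2m, hT2.1]
      rfl
    · simp only [hU12, if_neg (by omega : ¬ m1 + m2 ≤ m1), Nat.add_sub_cancel_left]
      exact hT2m
  have h123 := rel_append h12 hval12 hT3
  set U : ℕ → Finset (ℤ × ℤ) :=
    fun i => if i ≤ m1 + m2 then U12 i else scaleCells c (S (i - (m1 + m2))) with hU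
  have hvalU : U (m1 + m2 + L) = scaleCells c P := by
    rcases Nat.eq_zero_or_pos L with h | h
    · subst h
      simp only [hU, add_zero, if_pos le_rfl]
      rw [hval12, ← hT3.1]
      show scaleCells c (S 0) = scaleCells c P
      rw [show S 0 = P from hSL]
    · simp only [hU, if_neg (by omega : ¬ m1 + m2 + L ≤ m1 + m2), Nat.add_sub_cancel_left]
      rw [hSL]
  refine ⟨m1 + m2 + L, by omega, U, ?_, hvalU⟩
  exact (isBinGenSeq_iff_rel U (m1 + m2 + L)).mpr h123
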